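/- Let n ≥ 2. For a chain I_1 ≤ I_2 ≤ … ≤ I_a of nonempty proper subsets of {1,…,n} (with respect to the partial order ≤, so that |I_1| ≥ |I_2| ≥ … ≥ |I_a|), associate the multiset of pairs { ((I_c)_j , j) : 1 ≤ c ≤ a, 1 ≤ j ≤ |I_c| }, where (I_c)_j denotes the j-th smallest element of I_c. Then this association is injective: two chains I_1 ≤ … ≤ I_a and J_1 ≤ … ≤ J_b with equal associated multisets satisfy a = b and I_c = J_c for all c. (Equivalently, different products of minors with comparable indices have different leading monomials ∏_{c,j} z_{(I_c)_j, j}.) -/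

import Mathlib

open Finset
open scoped Classical

namespace Paper

/-- The value (as a natural number) of the `p`-th smallest element (0-based) of `I`;
junk value `0` out of range. -/
def elemV {n : ℕ} (I : Finset (Fin n)) (p : ℕ) : ℕ :=
  ((I.sort (· ≤ ·)).map Fin.val).getD p 0

/-- The `p`-th smallest element (0-based) of `I`; junk value out of range. -/
def elemF {n : ℕ} (hn : 0 < n) (I : Finset (Fin n)) (p : ℕ) : Fin n :=
  (I.sort (· ≤ ·)).getD p ⟨0, hn⟩

/-- The minor of `z` on the rows of `I` (in increasing order) and the first `I.card` columns. -/
noncomputable def fminor {R : Type*} [CommRing R] {n : ℕ} (z : Matrix (Fin n) (Fin n) R)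
    (I : Finset (Fin n)) : R :=
  if h : I.card ≤ n then
    Matrix.det (Matrix.of fun a b : Fin I.card => z (I.orderEmbOfFin rfl a) (Fin.castLE h b))
  else 0

/-- The minor of `z` whose rows are the elements of the multiset `L` (sorted increasingly,
with multiplicity) and whose columns are the first `L.card` columns.  If `L` has a repeated
element the corresponding determinant has two equal rows, hence it is `0`. -/
noncomputable def mminor {R : Type*} [CommRing R] {N : ℕ} (z : Matrix (Fin N) (Fin N) R)
    (L : Multiset (Fin N)) : R :=
  if h : (L.sort (· ≤ ·)).length ≤ N then
    Matrix.det (Matrix.of fun a b : Fin (L.sort (· ≤ ·)).length =>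
      z ((L.sort (· ≤ ·)).get a) (Fin.castLE h b))
  else 0

/-- `I ≤ J` iff `|I| ≥ |J|` and `i_s ≤ j_s` for all `s ≤ |J|` (0-based positions). -/
def finsetLE {n : ℕ} (I J : Finset (Fin n)) : Prop :=
  J.card ≤ I.card ∧ ∀ p < J.card, elemV I p ≤ elemV J p

/-- `J ≺ I` iff `|J| < |I|`, or `|J| = |I|` and the largest element of the symmetric
difference `I Δ J` belongs to `I`. -/
def prec {n : ℕ} (J I : Finset (Fin n)) : Prop :=
  J.card < I.card ∨ (J.card = I.card ∧
    ∃ x ∈ (I \ J) ∪ (J \ I), x ∈ I ∧ ∀ y ∈ (I \ J) ∪ (J \ I), y ≤ x)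

/-- `L` is a strictly decreasing list of (0-based) positions `< |J|` at which the
coordinatewise comparison of `I` and `J` alternates strictly, starting with `i > j`. -/
def altChain {n : ℕ} (I J : Finset (Fin n)) (L : List ℕ) : Prop :=
  L.Chain' (· > ·) ∧ (∀ p ∈ L, p < J.card) ∧
    ∀ t < L.length, if Even t then elemV J (L.getD t 0) < elemV I (L.getD t 0)
      else elemV I (L.getD t 0) < elemV J (L.getD t 0)

/-- `k(I,J)`: `0` for comparable pairs; otherwise the number of switch positions in the
coordinatewise comparison of `I` and `J` (the greedy top-down alternating count, equivalently
the longest strictly alternating subsequence starting with `i > j`). -/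
noncomputable def kNum {n : ℕ} (I J : Finset (Fin n)) : ℕ :=
  if finsetLE I J ∨ finsetLE J I then 0
  else
    letI := Classical.decPred fun m => ∃ L : List ℕ, L.length = m ∧ altChain I J L
    Nat.findGreatest (fun m => ∃ L : List ℕ, L.length = m ∧ altChain I J L) J.card

/-- The symmetrised `k(I,J) = k(J,I)`, computed in the orientation where the `≺`-larger
set plays the role of `I`. -/
noncomputable def kOf {n : ℕ} (I J : Finset (Fin n)) : ℕ :=
  if prec J I then kNum I J else kNum J I

/-- The sign of the permutation rearranging the increasing enumeration of `A` into the
concatenation (elements of `B` increasing, then elements of `A \ B` increasing). -/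
def signAsc {n : ℕ} (A B : Finset (Fin n)) : ℤ :=
  (-1) ^ (∑ b ∈ B, ((A \ B).filter (· < b)).card)

/-- The sign of the permutation rearranging the decreasing enumeration of `S` into the
concatenation (elements of `A` decreasing, then elements of `S \ A` decreasing). -/
def signDesc {n : ℕ} (S A : Finset (Fin n)) : ℤ :=
  (-1) ^ (∑ a ∈ A, ((S \ A).filter (a < ·)).card)

/-- The row (index) `l` of `{1,…,n}` inside `{1,1̄,…,n,n̄}` (0-based: `l ↦ 2l`). -/
def emb0 {n : ℕ} (l : Fin n) : Fin (2 * n) := ⟨2 * l.1, by have := l.2; omega⟩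

/-- The row (index) `l̄` inside `{1,1̄,…,n,n̄}` (0-based: `l̄ ↦ 2l+1`). -/
def emb1 {n : ℕ} (l : Fin n) : Fin (2 * n) := ⟨2 * l.1 + 1, by have := l.2; omega⟩

/-- `ε_{uv}`: `1` if `v = ū`, `-1` if `u = v̄`, `0` otherwise. -/
def eps {R : Type*} [CommRing R] {n : ℕ} (u v : Fin (2 * n)) : R :=
  if u.1 % 2 = 0 ∧ v.1 = u.1 + 1 then 1
  else if v.1 % 2 = 0 ∧ u.1 = v.1 + 1 then -1 else 0

/-- `J` is forbidden if `j_b = ā` for some `1 ≤ a < b ≤ |J|` (1-based positions; `ā` has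
0-based value `2a-1` in the ordering `1 < 1̄ < 2 < 2̄ < …`). -/
def Forbidden {N : ℕ} (J : Finset (Fin N)) : Prop :=
  ∃ a b : ℕ, 1 ≤ a ∧ a < b ∧ b ≤ J.card ∧ elemV J (b - 1) = 2 * a - 1

end Paper


namespace Paper

section Aux
variable {n : ℕ}

lemma elemV_eq_getElem {I : Finset (Fin n)} {p : ℕ} (hp : p < I.card) :
    elemV I p = ((I.sort (· ≤ ·))[p]'(by simpa [Finset.length_sort] using hp)).val := by
  unfold elemV
  rw [List.getD_eq_getElem _ _ (by simpa [Finset.length_sort] using hp)]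
  simp

lemma finsetLE_trans {I J K : Finset (Fin n)} (h1 : finsetLE I J) (h2 : finsetLE J K) :
    finsetLE I K :=
  ⟨h2.1.trans h1.1, fun p hp => (h1.2 p (lt_of_lt_of_le hp h2.1)).trans (h2.2 p hp)⟩

lemma chain_head_le {I : Finset (Fin n)} {T : List (Finset (Fin n))}
    (hc : List.Chain' finsetLE (I :: T)) : ∀ J ∈ T, finsetLE I J := by
  induction T generalizing I with
  | nil => simp
  | cons J T ih =>
    intro K hK
    rw [show List.Chain' finsetLE (I :: J :: T) = List.IsChain finsetLE (I :: J :: T) from rfl,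
      List.isChain_cons_cons] at hc
    rcases List.mem_cons.mp hK with rfl | hK
    · exact hc.1
    · exact finsetLE_trans hc.1 (ih hc.2 K hK)

lemma mem_listSum {α β : Type*} {f : α → Multiset β} {l : List α} {x : β} :
    x ∈ (l.map f).sum ↔ ∃ K ∈ l, x ∈ f K := by
  induction l with
  | nil => simp
  | cons a l ih => simp [ih]

lemma pair_mem_enum_iff {I : Finset (Fin n)} {j : ℕ} {x : Fin n} :
    (j, x) ∈ (((I.sort (· ≤ ·)).zipIdx.map Prod.swap) : Multiset (ℕ × Fin n)) ↔
      ∃ hj : j < I.card, (I.sort (· ≤ ·))[j]'(by simpa [Finset.length_sort] using hj) = x := by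
  rw [Multiset.mem_coe, show ((j, x) ∈ (I.sort (· ≤ ·)).zipIdx.map Prod.swap) ↔
      (x, j) ∈ (I.sort (· ≤ ·)).zipIdx from ⟨fun h => by
        obtain ⟨⟨a, b⟩, hab, he⟩ := List.mem_map.mp h
        simp only [Prod.swap_prod_mk, Prod.mk.injEq] at he
        obtain ⟨rfl, rfl⟩ := he
        exact hab, fun h => List.mem_map.mpr ⟨(x, j), h, rfl⟩⟩,
    List.mk_mem_zipIdx_iff_getElem?, List.getElem?_eq_some_iff]
  constructor
  · rintro ⟨h, hx⟩
    exact ⟨by simpa [Finset.length_sort] using h, hx⟩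
  · rintro ⟨h, hx⟩
    exact ⟨by simpa [Finset.length_sort] using h, hx⟩

lemma mem_sum_head {I : Finset (Fin n)} {T : List (Finset (Fin n))}
    (hc : List.Chain' finsetLE (I :: T)) {j : ℕ} {x : Fin n}
    (hx : (j, x) ∈ ((I :: T).map fun K =>
        (((K.sort (· ≤ ·)).zipIdx.map Prod.swap) : Multiset (ℕ × Fin n))).sum) :
    j < I.card ∧ elemV I j ≤ x.val := by
  rw [mem_listSum] at hx
  obtain ⟨K, hK, hmem⟩ := hx
  rw [pair_mem_enum_iff] at hmem
  obtain ⟨hj, hval⟩ := hmem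
  have hKval : elemV K j = x.val := by rw [elemV_eq_getElem hj, hval]
  rcases List.mem_cons.mp hK with rfl | hK
  · exact ⟨hj, le_of_eq hKval⟩
  · have hle := chain_head_le hc K hK
    exact ⟨lt_of_lt_of_le hj hle.1, hKval ▸ hle.2 j hj⟩

lemma head_pair_mem {I : Finset (Fin n)} {T : List (Finset (Fin n))}
    {j : ℕ} (hj : j < I.card) :
    (j, (I.sort (· ≤ ·))[j]'(by simpa [Finset.length_sort] using hj)) ∈
      ((I :: T).map fun K => (((K.sort (· ≤ ·)).zipIdx.map Prod.swap) : Multiset (ℕ × Fin n))).sum := by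
  rw [mem_listSum]
  refine ⟨I, by simp, ?_⟩
  rw [pair_mem_enum_iff]
  exact ⟨hj, rfl⟩

end Aux

end Paper

namespace Paper

/-- a chain of nonempty proper subsets is determined by the multiset of
pairs (element, column position) of its associated leading monomial. -/
theorem chain_injective_of_multiset_pairs (n : ℕ) (hn : 2 ≤ n)
    (L M : List (Finset (Fin n)))
    (hLchain : List.Chain' finsetLE L) (hLmem : ∀ I ∈ L, I.Nonempty ∧ I ≠ Finset.univ)
    (hMchain : List.Chain' finsetLE M) (hMmem : ∀ I ∈ M, I.Nonempty ∧ I ≠ Finset.univ)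
    (h : (L.map fun I => (((I.sort (· ≤ ·)).zipIdx.map Prod.swap) : Multiset (ℕ × Fin n))).sum
       = (M.map fun I => (((I.sort (· ≤ ·)).zipIdx.map Prod.swap) : Multiset (ℕ × Fin n))).sum) :
    L = M := by
  clear hn
  induction L generalizing M with
  | nil =>
    cases M with
    | nil => rfl
    | cons J U =>
      exfalso
      have hJ : 0 < J.card := Finset.card_pos.mpr (hMmem J (by simp)).1
      have := head_pair_mem (T := U) hJ
      rw [← h] at this
      simp at this
  | cons I T ih =>
    cases M with
    | nil =>
      exfalso
      have hI : 0 < I.card := Finset.card_pos.mpr (hLmem I (by simp)).1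
      have := head_pair_mem (T := T) hI
      rw [h] at this
      simp at this
    | cons J U =>
      -- first show I = J
      have hcard1 : I.card ≤ J.card := by
        have hI : I.card - 1 < I.card :=
          Nat.sub_lt (Finset.card_pos.mpr (hLmem I (by simp)).1) one_pos
        have := (mem_sum_head hMchain (h ▸ head_pair_mem (T := T) hI)).1
        omega
      have hcard2 : J.card ≤ I.card := by
        have hJ : J.card - 1 < J.card :=
          Nat.sub_lt (Finset.card_pos.mpr (hMmem J (by simp)).1) one_pos
        have := (mem_sum_head hLchain (h ▸ head_pair_mem (T := U) hJ)).1
        omega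
      have hcard : I.card = J.card := le_antisymm hcard1 hcard2
      have hsortEq : I.sort (· ≤ ·) = J.sort (· ≤ ·) := by
        apply List.ext_getElem (by simp [Finset.length_sort, hcard])
        intro p hp1 hp2
        have hpI : p < I.card := by simpa [Finset.length_sort] using hp1
        have hpJ : p < J.card := by simpa [Finset.length_sort] using hp2
        have h1 : elemV J p ≤ elemV I p := by
          have := (mem_sum_head hMchain (h ▸ head_pair_mem (T := T) hpI)).2
          rwa [← elemV_eq_getElem hpI] at this
        have h2 : elemV I p ≤ elemV J p := by
          have := (mem_sum_head hLchain (h ▸ head_pair_mem (T := U) hpJ)).2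
          rwa [← elemV_eq_getElem hpJ] at this
        have : elemV I p = elemV J p := le_antisymm h2 h1
        rw [elemV_eq_getElem hpI, elemV_eq_getElem hpJ] at this
        exact Fin.val_injective this
      have hIJ : I = J := by
        have : (I.val : Multiset (Fin n)) = J.val := by
          rw [← Finset.sort_eq (s := I) (r := (· ≤ ·)), ← Finset.sort_eq (s := J) (r := (· ≤ ·)), hsortEq]
        exact Finset.val_injective this
      subst hIJ
      -- cancel and recurse
      have htail : (T.map fun K => (((K.sort (· ≤ ·)).zipIdx.map Prod.swap) : Multiset (ℕ × Fin n))).sum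
          = (U.map fun K => (((K.sort (· ≤ ·)).zipIdx.map Prod.swap) : Multiset (ℕ × Fin n))).sum := by
        have h' := h
        simp only [List.map_cons, Multiset.sum_cons, hsortEq] at h'
        exact add_left_cancel h'
      have := ih U hLchain.tail (fun K hK => hLmem K (List.mem_cons_of_mem _ hK))
        hMchain.tail (fun K hK => hMmem K (List.mem_cons_of_mem _ hK)) htail
      rw [this]

end Paper
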